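/- If π* ∈ Π(n,m,C) has Sinkhorn form (π*)_{i,j} = a_i exp(M_{i,j}/ε) b_j with a, b positive, and σ* ∈ Π(n,m,C), then the cross entropy H(σ*, π*) := −∑_{i,j} σ*_{i,j} log(π*)_{i,j} satisfies H(σ*, π*) = −s(C) + (1/ε)[Tr((π*)ᵀM) + εH(π*) − Tr((σ*)ᵀM)], where s(C) = ∑_j C_j and H(π) = −∑ π_{i,j}(log π_{i,j} − 1). -/

import Mathlib

theorem sinkhorn_cross_entropy_value_identity (n m : ℕ)
    (C : Fin m → ℝ) (hCpos : ∀ j, 0 ≤ C j) (hC : ∑ j, C j = (n : ℝ))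
    (M : Matrix (Fin n) (Fin m) ℝ) (ε : ℝ) (hε : 0 < ε)
    (a : Fin n → ℝ) (b : Fin m → ℝ) (ha : ∀ i, 0 < a i) (hb : ∀ j, 0 < b j)
    (πst : Matrix (Fin n) (Fin m) ℝ)
    (hform : ∀ i j, πst i j = a i * Real.exp (M i j / ε) * b j)
    (hπ : (∀ i j, πst i j ∈ Set.Icc (0 : ℝ) 1) ∧ (∀ i, ∑ j, πst i j = 1) ∧
      (∀ j, ∑ i, πst i j = C j))
    (σst : Matrix (Fin n) (Fin m) ℝ)
    (hσ : (∀ i j, σst i j ∈ Set.Icc (0 : ℝ) 1) ∧ (∀ i, ∑ j, σst i j = 1) ∧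
      (∀ j, ∑ i, σst i j = C j)) :
    -∑ i, ∑ j, σst i j * Real.log (πst i j) =
      -(∑ j, C j) + (1 / ε) *
        ((∑ i, ∑ j, πst i j * M i j)
          + ε * (-∑ i, ∑ j, πst i j * (Real.log (πst i j) - 1))
          - ∑ i, ∑ j, σst i j * M i j) := by
  have hlog : ∀ i j, Real.log (πst i j)
      = Real.log (a i) + M i j / ε + Real.log (b j) := by
    intro i j
    rw [hform i j, Real.log_mul (mul_pos (ha i) (Real.exp_pos _)).ne' (hb j).ne',
      Real.log_mul (ha i).ne' (Real.exp_pos _).ne', Real.log_exp]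
  have key : ∀ (τ : Matrix (Fin n) (Fin m) ℝ), (∀ i, ∑ j, τ i j = 1) →
      (∀ j, ∑ i, τ i j = C j) →
      ∑ i, ∑ j, τ i j * Real.log (πst i j)
        = (∑ i, Real.log (a i)) + (1 / ε) * (∑ i, ∑ j, τ i j * M i j)
          + ∑ j, C j * Real.log (b j) := by
    intro τ hrow hcol
    have h1 : ∀ i j, τ i j * Real.log (πst i j)
        = τ i j * Real.log (a i) + (1 / ε) * (τ i j * M i j)
          + τ i j * Real.log (b j) := by
      intro i j
      rw [hlog]
      field_simp
    simp only [h1, Finset.sum_add_distrib, ← Finset.mul_sum]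
    congr 1
    · congr 1
      · refine Finset.sum_congr rfl fun i _ => ?_
        rw [← Finset.sum_mul, hrow i, one_mul]
    · rw [Finset.sum_comm]
      refine Finset.sum_congr rfl fun j _ => ?_
      rw [← Finset.sum_mul, hcol j]
  have hsum : ∑ i, ∑ j, πst i j = ∑ j, C j := by
    refine Finset.sum_comm.trans ?_
    exact Finset.sum_congr rfl fun j _ => hπ.2.2 j
  have hent : ∑ i, ∑ j, πst i j * (Real.log (πst i j) - 1)
      = ∑ i, ∑ j, πst i j * Real.log (πst i j) - ∑ j, C j := by
    simp only [mul_sub, mul_one, Finset.sum_sub_distrib, hsum]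
  rw [key σst hσ.2.1 hσ.2.2, hent, key πst hπ.2.1 hπ.2.2]
  field_simp
  ring
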